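/- Volume of the intersection of a boundary strip with a ball (estimate (4.2) of the paper): For every bounded convex open set Ω ⊂ ℝ³ there exists a constant C (depending only on Ω) such that for all real numbers h, d with 0 < h ≤ d and every point x₀ ∈ ℝ³, the Lebesgue measure of the set {x ∈ Ω : dist(x, ∂Ω) ≤ h and |x − x₀| ≤ d} is at most C h d². -/

import Mathlib

open MeasureTheory Metric Set
open scoped RealInnerProductSpace ENNReal NNReal Pointwise

set_option maxHeartbeats 1000000

noncomputable section

/-- Three-dimensional Euclidean space. -/
abbrev E3 : Type := EuclideanSpace ℝ (Fin 3)

/-- A convex polyhedron: a bounded convex open set which is the interior of the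
convex hull of a finite set of points. -/
def IsConvexPolyhedron (Ω : Set E3) : Prop :=
  IsOpen Ω ∧ Bornology.IsBounded Ω ∧ Convex ℝ Ω ∧
    ∃ S : Finset E3, Ω = interior (convexHull ℝ (S : Set E3))

/-- The closed tetrahedron with vertices `v 0, v 1, v 2, v 3`. -/
def tet (v : Fin 4 → E3) : Set E3 := convexHull ℝ (Set.range v)

/-- A quasi-uniform conforming tetrahedral partition of `Ω` with mesh size `h`
and quasi-uniformity constant `c`, recorded by the vertex tuples of its tetrahedra. -/
def IsTetPartition (Ω : Set E3) (T : Finset (Fin 4 → E3)) (h c : ℝ) : Prop :=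
  (∀ v ∈ T, AffineIndependent ℝ v) ∧
  (⋃ v ∈ T, tet v) = closure Ω ∧
  (∀ v ∈ T, ∀ w ∈ T, tet v ≠ tet w → interior (tet v) ∩ interior (tet w) = ∅) ∧
  (∀ v ∈ T, ∀ w ∈ T, tet v ≠ tet w →
    tet v ∩ tet w = ∅ ∨ tet v ∩ tet w = convexHull ℝ (Set.range v ∩ Set.range w)) ∧
  (∀ v ∈ T, Metric.diam (tet v) ≤ h) ∧
  (∀ v ∈ T, ∃ x : E3, Metric.closedBall x (c * h) ⊆ tet v)

/-- The finite element space `S_h` of continuous piecewise polynomials of degree `≤ r`. -/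
def MemSh (Ω : Set E3) (T : Finset (Fin 4 → E3)) (r : ℕ) (u : E3 → ℝ) : Prop :=
  ContinuousOn u (closure Ω) ∧
  ∀ v ∈ T, ∃ p : MvPolynomial (Fin 3) ℝ,
    p.totalDegree ≤ r ∧ ∀ x ∈ tet v, u x = MvPolynomial.eval (fun i => x i) p

/-- The subspace `S̊_h` of finite element functions vanishing on the boundary. -/
def MemSh0 (Ω : Set E3) (T : Finset (Fin 4 → E3)) (r : ℕ) (u : E3 → ℝ) : Prop :=
  MemSh Ω T r u ∧ ∀ x ∈ frontier Ω, u x = 0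

/-- The Laplacian, as the trace of the Hessian. -/
def lap (v : E3 → ℝ) (x : E3) : ℝ :=
  ∑ i : Fin 3,
    fderiv ℝ (fun y => fderiv ℝ v y (EuclideanSpace.single i 1)) x (EuclideanSpace.single i 1)

/-- The `L^p(A)` norm. -/
def LpN (A : Set E3) (p : ℝ) (w : E3 → ℝ) : ℝ := (∫ x in A, |w x| ^ p) ^ (1 / p)

/-- The `W^{1,p}(A)` norm. -/
def W1pN (A : Set E3) (p : ℝ) (w : E3 → ℝ) : ℝ :=
  (∫ x in A, (|w x| ^ p + ‖gradient w x‖ ^ p)) ^ (1 / p)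

/-- The `W^{2,p}(A)` norm. -/
def W2pN (A : Set E3) (p : ℝ) (w : E3 → ℝ) : ℝ :=
  (∫ x in A, (|w x| ^ p + ‖gradient w x‖ ^ p + ‖iteratedFDeriv ℝ 2 w x‖ ^ p)) ^ (1 / p)

/-- Convex interpolation of a point with a ball stays in the set. -/
lemma aux_combo {Ω : Set E3} (hΩc : Convex ℝ Ω) {x w : E3} {ρ s : ℝ}
    (hx : x ∈ Ω) (hw : Metric.closedBall w ρ ⊆ Ω) (_hρ : 0 ≤ ρ)
    (hs0 : 0 ≤ s) (hs1 : s ≤ 1) :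
    Metric.closedBall (x + s • (w - x)) (s * ρ) ⊆ Ω := by
  rcases eq_or_lt_of_le hs0 with rfl | hs
  · intro y hy
    have hyx : y = x := by
      have := mem_closedBall.1 hy
      simp only [zero_smul, add_zero, zero_mul] at this
      exact dist_le_zero.1 this
    simpa [hyx] using hx
  · intro y hy
    set e := y - (x + s • (w - x)) with he
    have hey : y = x + s • (w - x) + e := by simp [he]
    have hne : ‖e‖ ≤ s * ρ := by
      have := mem_closedBall.1 hy
      rwa [dist_eq_norm] at this
    have hw' : w + s⁻¹ • e ∈ Ω := by
      apply hw
      rw [mem_closedBall, dist_eq_norm]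
      have hcan : w + s⁻¹ • e - w = s⁻¹ • e := by abel
      have hnorm : ‖w + s⁻¹ • e - w‖ = s⁻¹ * ‖e‖ := by
        rw [hcan, norm_smul, Real.norm_eq_abs, abs_of_pos (inv_pos.2 hs)]
      rw [hnorm, inv_mul_le_iff₀ hs]
      linarith
    have hmem := hΩc hx hw' (by linarith : (0:ℝ) ≤ 1 - s) hs0 (by ring)
    have heq : (1 - s) • x + s • (w + s⁻¹ • e) = y := by
      rw [hey, smul_add, smul_inv_smul₀ hs.ne']
      module
    rwa [heq] at hmem

/-- If a closed ball around `x` is inside the open set `Ω`, then `x` is deep inside. -/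
lemma aux_depth {Ω : Set E3} (hΩo : IsOpen Ω) (hfr : (frontier Ω).Nonempty)
    {x : E3} {ρ : ℝ} (hsub : Metric.closedBall x ρ ⊆ Ω) :
    ρ ≤ Metric.infDist x (frontier Ω) := by
  by_contra hlt
  push_neg at hlt
  obtain ⟨y, hyf, hxy⟩ := (Metric.infDist_lt_iff hfr).1 hlt
  have hyΩ : y ∈ Ω := hsub (by rw [mem_closedBall, dist_comm]; exact hxy.le)
  have hmem : y ∈ closure Ω \ Ω := by rwa [← hΩo.frontier_eq]
  exact hmem.2 hyΩ

/-- **Volume of the intersection of a boundary strip with a ball (estimate (4.2)).** -/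
theorem boundary_strip_ball_volume
    (Ω : Set E3) (hΩo : IsOpen Ω) (hΩb : Bornology.IsBounded Ω) (hΩc : Convex ℝ Ω) :
    ∃ C : ℝ, ∀ h d : ℝ, 0 < h → h ≤ d → ∀ x₀ : E3,
      volume {x ∈ Ω | Metric.infDist x (frontier Ω) ≤ h ∧ dist x x₀ ≤ d}
        ≤ ENNReal.ofReal (C * h * d ^ 2) := by
  rcases Ω.eq_empty_or_nonempty with rfl | hne
  · refine ⟨1, fun h d _ _ x₀ => ?_⟩
    have hem : {x ∈ (∅ : Set E3) |
        Metric.infDist x (frontier (∅:Set E3)) ≤ h ∧ dist x x₀ ≤ d} = ∅ := by simp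
    rw [hem]; simp
  -- an inner closed ball
  obtain ⟨z, hz⟩ := hne
  obtain ⟨ε, hε, hball'⟩ := Metric.isOpen_iff.1 hΩo z hz
  set r₀ := ε / 2 with hr₀def
  have hr₀ : 0 < r₀ := by positivity
  have hball : Metric.closedBall z r₀ ⊆ Ω :=
    (Metric.closedBall_subset_ball (by rw [hr₀def]; linarith)).trans hball'
  -- an outer closed ball
  obtain ⟨R', hR'⟩ := hΩb.subset_closedBall z
  set R := max R' r₀ with hRdef
  have hRr : r₀ ≤ R := le_max_right _ _
  have hRpos : 0 < R := lt_of_lt_of_le hr₀ hRr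
  have hR : Ω ⊆ Metric.closedBall z R :=
    hR'.trans (Metric.closedBall_subset_closedBall (le_max_left _ _))
  -- frontier is nonempty
  have hfr : (frontier Ω).Nonempty := by
    rw [nonempty_frontier_iff]
    refine ⟨⟨z, hz⟩, fun huniv => ?_⟩
    set w : E3 := z + (R + 1) • EuclideanSpace.single (0 : Fin 3) (1:ℝ) with hw
    have hwz : dist w z = R + 1 := by
      rw [dist_eq_norm]
      simp [hw, norm_smul, abs_of_pos (by linarith : (0:ℝ) < R + 1)]
    have hwΩ : w ∈ Ω := huniv ▸ mem_univ w
    have := mem_closedBall.1 (hR hwΩ)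
    rw [hwz] at this
    linarith
  -- volume quantities
  set V := (volume Ω).toReal with hVdef
  have hVfin : volume Ω ≠ ⊤ := hΩb.measure_lt_top.ne
  have hV : volume Ω = ENNReal.ofReal V := (ENNReal.ofReal_toReal hVfin).symm
  have hV0 : 0 ≤ V := ENNReal.toReal_nonneg
  set B₁ := (volume (Metric.closedBall (0:E3) 1)).toReal with hB₁def
  have hB₁fin : volume (Metric.closedBall (0:E3) 1) ≠ ⊤ :=
    Metric.isBounded_closedBall.measure_lt_top.ne
  have hB₁ : volume (Metric.closedBall (0:E3) 1) = ENNReal.ofReal B₁ :=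
    (ENNReal.ofReal_toReal hB₁fin).symm
  have hB₁0 : 0 ≤ B₁ := ENNReal.toReal_nonneg
  set K := 1 + 8 * R / r₀ with hKdef
  have hK1 : 1 ≤ K := le_add_of_nonneg_right (by positivity)
  have hK0 : 0 ≤ K := by linarith
  have t1 : 0 ≤ 8 * V / r₀ ^ 3 := by positivity
  have t2 : 0 ≤ 384 * V / r₀ ^ 3 := by positivity
  have t3 : 0 ≤ K ^ 3 * B₁ := mul_nonneg (pow_nonneg hK0 3) hB₁0
  clear_value r₀ R V B₁ K
  refine ⟨8 * V / r₀ ^ 3 + 384 * V / r₀ ^ 3 + K ^ 3 * B₁, ?_⟩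
  intro h d hh hd x₀
  have hd0 : 0 < d := lt_of_lt_of_le hh hd
  set S := {x ∈ Ω | Metric.infDist x (frontier Ω) ≤ h ∧ dist x x₀ ≤ d} with hSdef
  have hSsub : S ⊆ Ω := fun x hx => hx.1
  have hSm : MeasurableSet S := by
    apply MeasurableSet.inter hΩo.measurableSet
    apply MeasurableSet.inter
    · exact measurableSet_le (Metric.continuous_infDist_pt _).measurable measurable_const
    · exact measurableSet_le (continuous_id.dist continuous_const).measurable measurable_const
  have hhd : (0:ℝ) ≤ h * d ^ 2 := by positivity
  have hCsum : ∀ c : ℝ,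
      c ≤ 8 * V / r₀ ^ 3 + 384 * V / r₀ ^ 3 + K ^ 3 * B₁ →
      volume S ≤ ENNReal.ofReal (c * h * d ^ 2) →
      volume S ≤ ENNReal.ofReal ((8 * V / r₀ ^ 3 + 384 * V / r₀ ^ 3 + K ^ 3 * B₁) * h * d ^ 2) := by
    intro c hcle hvol
    refine hvol.trans (ENNReal.ofReal_le_ofReal ?_)
    nlinarith [mul_le_mul_of_nonneg_right hcle hhd]
  rcases lt_or_ge (r₀ / 2) h with hcase1 | hcase2
  · -- Case 1 : h large: trivial bound by volume of Ω
    apply hCsum (8 * V / r₀ ^ 3) (by linarith)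
    have hmono : volume S ≤ volume Ω := measure_mono hSsub
    rw [hV] at hmono
    refine hmono.trans (ENNReal.ofReal_le_ofReal ?_)
    have h1 : r₀ ^ 3 < 8 * h ^ 3 := by
      have hlt := pow_lt_pow_left₀ (show r₀ < 2 * h by linarith) hr₀.le (n := 3) (by norm_num)
      have hexp : (2 * h) ^ 3 = 8 * h ^ 3 := by ring
      linarith
    have h2 : h ^ 3 ≤ h * d ^ 2 := by
      have hsq : h ^ 2 ≤ d ^ 2 := by nlinarith
      nlinarith [mul_le_mul_of_nonneg_left hsq hh.le]
    rw [div_mul_eq_mul_div, div_mul_eq_mul_div, le_div_iff₀ (by positivity)]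
    nlinarith
  rcases le_or_gt d (r₀ / 8) with hcase3 | hcase2'
  · -- Case 3 : small d, translation argument
    apply hCsum (K ^ 3 * B₁) (by linarith)
    rcases S.eq_empty_or_nonempty with hSemp | ⟨p, hp⟩
    · rw [hSemp]; simp
    obtain ⟨hpΩ, hpdist, hpball⟩ := hp
    set v : E3 := (4 * h / r₀) • (z - p) with hvdef
    clear_value v
    set N := ⌈d / h⌉₊ with hNdef
    have hdh1 : 1 ≤ d / h := (one_le_div hh).2 hd
    have hNge : d / h ≤ (N : ℝ) := Nat.le_ceil _
    have hNle : (N : ℝ) ≤ 2 * d / h := by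
      have hc := Nat.ceil_lt_add_one (by positivity : (0:ℝ) ≤ d / h)
      have h2 : d / h + 1 ≤ 2 * d / h := by
        have : 2 * d / h = d / h + d / h := by ring
        rw [this]; linarith
      exact le_trans hc.le h2
    -- norm bound on x - p for x ∈ S
    have hxp : ∀ x ∈ S, ‖x - p‖ ≤ 2 * d := by
      intro x hx
      have htri : dist x p ≤ dist x x₀ + dist x₀ p := dist_triangle _ _ _
      rw [dist_eq_norm] at htri
      have h1 := hx.2.2
      have h2 : dist x₀ p = dist p x₀ := dist_comm _ _
      linarith
    -- depth estimate for radial translates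
    have hdeep : ∀ x ∈ S, ∀ s : ℝ, 0 < s → s ≤ 1 →
        s * (3 / 4 * r₀) ≤ Metric.infDist (x + s • (z - p)) (frontier Ω) := by
      intro x hx s hs0 hs1
      set w : E3 := z + (x - p) with hwdef
      clear_value w
      have hρ : (0:ℝ) ≤ r₀ - 2 * d := by linarith
      have hwball : Metric.closedBall w (r₀ - 2 * d) ⊆ Ω := by
        refine (Metric.closedBall_subset_closedBall' ?_).trans hball
        have hdwz : dist w z = ‖x - p‖ := by
          rw [dist_eq_norm]
          congr 1
          rw [hwdef]; abel
        rw [hdwz]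
        have := hxp x hx
        linarith
      have hcombo := aux_combo hΩc hx.1 hwball hρ hs0.le hs1
      have hwx : w - x = z - p := by rw [hwdef]; abel
      rw [hwx] at hcombo
      have hdp := aux_depth hΩo hfr hcombo
      have hle : s * (3 / 4 * r₀) ≤ s * (r₀ - 2 * d) := by nlinarith
      linarith
    -- stepping out of S
    have hstep : ∀ x ∈ S, ∀ m : ℕ, 1 ≤ m → (m : ℝ) ≤ N → x + (m : ℝ) • v ∉ S := by
      intro x hx m hm1 hmN hmem
      have hsmul : (m : ℝ) • v = ((m : ℝ) * (4 * h / r₀)) • (z - p) := by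
        rw [hvdef, smul_smul]
      set s := (m : ℝ) * (4 * h / r₀) with hsdef
      clear_value s
      have hm1' : (1:ℝ) ≤ (m:ℝ) := by exact_mod_cast hm1
      have h4 : 0 < 4 * h / r₀ := by positivity
      have hs0 : 0 < s := by nlinarith
      have hs1 : s ≤ 1 := by
        have hmle : (m : ℝ) ≤ 2 * d / h := hmN.trans hNle
        have h1 : s ≤ (2 * d / h) * (4 * h / r₀) := by
          rw [hsdef]; exact mul_le_mul_of_nonneg_right hmle h4.le
        have h2 : (2 * d / h) * (4 * h / r₀) = 8 * d / r₀ := by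
          field_simp; ring
        have h3 : 8 * d / r₀ ≤ 1 := by
          rw [div_le_one hr₀]; linarith
        linarith
      have hdepth := hdeep x hx s hs0 hs1
      rw [← hsmul] at hdepth
      have hs3 : 3 * h ≤ s * (3 / 4 * r₀) := by
        have hsl : 4 * h / r₀ ≤ s := by nlinarith
        have h4' : (4 * h / r₀) * (3 / 4 * r₀) = 3 * h := by field_simp
        nlinarith
      have := hmem.2.1
      linarith
    -- the translated family
    set f : ℕ → Set E3 := fun k => ((k : ℝ) • v) +ᵥ S with hfdef
    have hfm : ∀ k, MeasurableSet (f k) := fun k => hSm.const_vadd _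
    have hfvol : ∀ k, volume (f k) = volume S := fun k =>
      MeasureTheory.measure_vadd (μ := volume) _ S
    have hfdisj : ∀ j k : ℕ, j < k → (k : ℝ) ≤ N → Disjoint (f j) (f k) := by
      intro j k hjk hkN
      rw [Set.disjoint_left]
      rintro y hyj hyk
      obtain ⟨a, ha, hya⟩ := hyj
      obtain ⟨b, hb, hyb⟩ := hyk
      have hab' : (k : ℝ) • v + b = (j : ℝ) • v + a := by
        have := hyb.trans hya.symm
        simpa [vadd_eq_add] using this
      set m := k - j with hmdef
      have hm1 : 1 ≤ m := by omega
      have hmk : (m : ℝ) = (k : ℝ) - (j : ℝ) := by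
        rw [hmdef]; push_cast [Nat.cast_sub hjk.le]; ring
      have hmN : (m : ℝ) ≤ N := by
        have hj0 : (0:ℝ) ≤ (j:ℝ) := Nat.cast_nonneg _
        rw [hmk]; linarith
      have ha' : a = b + (m : ℝ) • v := by
        have h1 : a = ((k : ℝ) • v + b) - (j : ℝ) • v := by rw [hab']; abel
        rw [hmk, sub_smul, h1]; abel
      exact hstep b hb m hm1 hmN (ha' ▸ ha)
    -- union is inside a ball of radius K * d
    have hnormv : ‖v‖ ≤ 4 * h / r₀ * R := by
      rw [hvdef, norm_smul, Real.norm_eq_abs, abs_of_pos (by positivity)]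
      have : ‖z - p‖ = dist p z := by rw [dist_eq_norm, norm_sub_rev]
      rw [this]
      exact mul_le_mul_of_nonneg_left (mem_closedBall.1 (hR hpΩ)) (by positivity)
    have hsub2 : (⋃ k ∈ Finset.range (N + 1), f k) ⊆ Metric.closedBall x₀ (K * d) := by
      intro y hy
      simp only [Set.mem_iUnion] at hy
      obtain ⟨k, hk, hyk⟩ := hy
      obtain ⟨b, hb, hyb⟩ := hyk
      have hkN : (k : ℝ) ≤ N := by
        exact_mod_cast Nat.lt_succ_iff.1 (Finset.mem_range.1 hk)
      rw [mem_closedBall]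
      have hyb' : y = (k : ℝ) • v + b := by rw [← hyb]; simp [vadd_eq_add]
      have htri : dist y x₀ ≤ dist y b + dist b x₀ := dist_triangle _ _ _
      have hdyb : dist y b = ‖(k : ℝ) • v‖ := by
        rw [hyb', dist_eq_norm]
        congr 1
        abel
      have hkv : ‖(k : ℝ) • v‖ ≤ (N : ℝ) * (4 * h / r₀ * R) := by
        rw [norm_smul, Real.norm_eq_abs, abs_of_nonneg (Nat.cast_nonneg k)]
        have hN0 : (0:ℝ) ≤ (N:ℝ) := Nat.cast_nonneg _
        have := mul_le_mul hkN hnormv (norm_nonneg v) hN0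
        exact this
      have hNv : (N : ℝ) * (4 * h / r₀ * R) ≤ 8 * d * R / r₀ := by
        have h1 : (N : ℝ) * (4 * h / r₀ * R) ≤ (2 * d / h) * (4 * h / r₀ * R) := by
          apply mul_le_mul_of_nonneg_right hNle (by positivity)
        have h2 : (2 * d / h) * (4 * h / r₀ * R) = 8 * d * R / r₀ := by
          field_simp; ring
        linarith
      have hbx : dist b x₀ ≤ d := hb.2.2
      have hKd : d + 8 * d * R / r₀ = K * d := by rw [hKdef]; field_simp
      linarith
    -- measure counting
    have hpair : (↑(Finset.range (N + 1)) : Set ℕ).PairwiseDisjoint f := by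
      intro j hj k hk hjk
      rcases lt_or_gt_of_ne hjk with hlt | hgt
      · exact hfdisj j k hlt (by
          exact_mod_cast Nat.lt_succ_iff.1 (Finset.mem_range.1 (by simpa using hk)))
      · exact (hfdisj k j hgt (by
          exact_mod_cast Nat.lt_succ_iff.1 (Finset.mem_range.1 (by simpa using hj)))).symm
    have hcount : ((N + 1 : ℕ) : ℝ≥0∞) * volume S
        ≤ volume (Metric.closedBall x₀ (K * d)) := by
      have hbi := measure_biUnion_finset (μ := volume) hpair (fun k _ => hfm k)
      have hsum : ∑ k ∈ Finset.range (N + 1), volume (f k) = ((N + 1 : ℕ) : ℝ≥0∞) * volume S := by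
        rw [Finset.sum_congr rfl (fun k _ => hfvol k), Finset.sum_const, Finset.card_range,
          nsmul_eq_mul]
      calc ((N + 1 : ℕ) : ℝ≥0∞) * volume S
          = volume (⋃ k ∈ Finset.range (N + 1), f k) := by rw [hbi, hsum]
        _ ≤ volume (Metric.closedBall x₀ (K * d)) := measure_mono hsub2
    have hballvol : volume (Metric.closedBall x₀ (K * d))
        = ENNReal.ofReal ((K * d) ^ 3 * B₁) := by
      have := MeasureTheory.Measure.addHaar_closedBall' (volume : Measure E3) x₀
        (by positivity : (0:ℝ) ≤ K * d)
      rw [ENNReal.ofReal_mul (by positivity)]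
      rw [← hB₁]
      simpa using this
    -- conclude
    have hcast : ENNReal.ofReal (d / h) ≤ ((N + 1 : ℕ) : ℝ≥0∞) := by
      have h1 : d / h ≤ ((N + 1 : ℕ) : ℝ) := by push_cast; linarith
      calc ENNReal.ofReal (d / h) ≤ ENNReal.ofReal ((N + 1 : ℕ) : ℝ) :=
            ENNReal.ofReal_le_ofReal h1
        _ = ((N + 1 : ℕ) : ℝ≥0∞) := ENNReal.ofReal_natCast _
    calc volume S = (ENNReal.ofReal (h / d) * ENNReal.ofReal (d / h)) * volume S := by
          rw [← ENNReal.ofReal_mul (by positivity)]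
          have hone : h / d * (d / h) = 1 := by field_simp
          rw [hone, ENNReal.ofReal_one, one_mul]
      _ = ENNReal.ofReal (h / d) * (ENNReal.ofReal (d / h) * volume S) := mul_assoc _ _ _
      _ ≤ ENNReal.ofReal (h / d) * (((N + 1 : ℕ) : ℝ≥0∞) * volume S) :=
          mul_le_mul_right (mul_le_mul_left hcast _) _
      _ ≤ ENNReal.ofReal (h / d) * ENNReal.ofReal ((K * d) ^ 3 * B₁) := by
          rw [hballvol] at hcount
          exact mul_le_mul_right hcount _
      _ = ENNReal.ofReal ((h / d) * ((K * d) ^ 3 * B₁)) :=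
          (ENNReal.ofReal_mul (by positivity)).symm
      _ = ENNReal.ofReal (K ^ 3 * B₁ * h * d ^ 2) := by
          congr 1
          field_simp
  · -- Case 2 : homothety argument
    apply hCsum (384 * V / r₀ ^ 3) (by linarith)
    set lam := 1 - 2 * h / r₀ with hlamdef
    clear_value lam
    have hlam0 : 0 ≤ lam := by
      rw [hlamdef]
      have : 2 * h / r₀ ≤ 1 := by rw [div_le_one hr₀]; linarith
      linarith
    have hlam1 : lam ≤ 1 := by
      rw [hlamdef]
      have : 0 < 2 * h / r₀ := by positivity
      linarith
    set T := AffineMap.homothety z lam '' Ω with hTdef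
    have himg : ∀ x ∈ Ω, Metric.closedBall (AffineMap.homothety z lam x) ((1 - lam) * r₀) ⊆ Ω := by
      intro x hx
      have hcombo := aux_combo hΩc hx hball hr₀.le (by linarith : (0:ℝ) ≤ 1 - lam)
        (by linarith : 1 - lam ≤ 1)
      have heq : x + (1 - lam) • (z - x) = AffineMap.homothety z lam x := by
        rw [AffineMap.homothety_apply]
        simp only [vsub_eq_sub, vadd_eq_add]
        module
      rwa [heq] at hcombo
    have hTsub : T ⊆ Ω := by
      rintro y ⟨x, hx, rfl⟩
      exact himg x hx (mem_closedBall_self (by nlinarith))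
    have hTdeep : ∀ y ∈ T, 2 * h ≤ Metric.infDist y (frontier Ω) := by
      rintro y ⟨x, hx, rfl⟩
      have := aux_depth hΩo hfr (himg x hx)
      have heq : (1 - lam) * r₀ = 2 * h := by
        rw [hlamdef]; field_simp; ring
      linarith
    have hdisj : Disjoint T S := by
      rw [Set.disjoint_left]
      intro y hyT hyS
      have h1 := hTdeep y hyT
      have h2 := hyS.2.1
      linarith
    have hTvol : volume T = ENNReal.ofReal (lam ^ 3 * V) := by
      have := MeasureTheory.Measure.addHaar_image_homothety (volume : Measure E3) z lam Ω
      rw [hTdef]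
      rw [this, hV, ← ENNReal.ofReal_mul (by positivity)]
      congr 1
      have : |lam ^ Module.finrank ℝ E3| = lam ^ 3 := by
        rw [abs_of_nonneg (pow_nonneg hlam0 _)]
        congr 1
        simp [finrank_euclideanSpace]
      rw [this]
    have hunion : volume T + volume S ≤ ENNReal.ofReal V := by
      rw [← measure_union hdisj hSm, ← hV]
      exact measure_mono (Set.union_subset hTsub hSsub)
    rw [hTvol] at hunion
    have hsub' : volume S ≤ ENNReal.ofReal V - ENNReal.ofReal (lam ^ 3 * V) :=
      ENNReal.le_sub_of_add_le_left ENNReal.ofReal_ne_top hunion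
    have hsub'' : volume S ≤ ENNReal.ofReal (V - lam ^ 3 * V) := by
      rwa [ENNReal.ofReal_sub _ (by positivity)]
    refine hsub''.trans (ENNReal.ofReal_le_ofReal ?_)
    have e1 : V - lam ^ 3 * V ≤ 3 * (1 - lam) * V := by
      nlinarith [mul_nonneg (mul_nonneg hV0 (sq_nonneg (1 - lam)))
        (by linarith : (0:ℝ) ≤ lam + 2)]
    have e2 : 3 * (1 - lam) * V = 6 * h * V / r₀ := by
      rw [hlamdef]; ring
    have h64 : r₀ ^ 2 ≤ 64 * d ^ 2 := by nlinarith
    have e3 : 6 * h * V / r₀ ≤ 384 * V / r₀ ^ 3 * h * d ^ 2 := by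
      rw [div_mul_eq_mul_div, div_mul_eq_mul_div, div_le_div_iff₀ hr₀ (by positivity)]
      nlinarith [mul_nonneg (mul_nonneg hh.le hV0) (sq_nonneg r₀)]
    linarith
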